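/- For every integer k ≥ 1, ∫_0^π W_k(0,η) · (∂W_k/∂ξ)(0,η) dη = −(π / 2^{2k-1}) · ∑_{j=0}^{⌊(k-1)/2⌋} (k−2j)·C(k,j)², where (∂W_k/∂ξ)(0,η) denotes the partial derivative of W_k with respect to its first variable evaluated at (0,η). -/

import Mathlib

open Real intervalIntegral Finset

lemma integral_cos_rmul (r : ℝ) (hr : r ≠ 0) :
    ∫ x in (0:ℝ)..π, Real.cos (r * x) = Real.sin (r * π) / r := by
  rw [intervalIntegral.integral_comp_mul_left Real.cos hr]
  simp [integral_cos, div_eq_inv_mul]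

lemma sin_orth (m n : ℤ) (hm : 0 < m) (hn : 0 < n) :
    ∫ x in (0:ℝ)..π, Real.sin (m * x) * Real.sin (n * x)
      = if m = n then π / 2 else 0 := by
  have key : ∀ x : ℝ, Real.sin (m * x) * Real.sin (n * x)
      = (Real.cos (((m : ℝ) - n) * x) - Real.cos (((m : ℝ) + n) * x)) / 2 := by
    intro x
    rw [sub_mul, add_mul, Real.cos_sub, Real.cos_add]
    ring
  simp only [key]
  have h1 : IntervalIntegrable (fun x => Real.cos (((m:ℝ) - n) * x)) MeasureTheory.volume 0 π :=
    (Real.continuous_cos.comp (continuous_const.mul continuous_id)).intervalIntegrable _ _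
  have h2 : IntervalIntegrable (fun x => Real.cos (((m:ℝ) + n) * x)) MeasureTheory.volume 0 π :=
    (Real.continuous_cos.comp (continuous_const.mul continuous_id)).intervalIntegrable _ _
  rw [intervalIntegral.integral_div, intervalIntegral.integral_sub h1 h2]
  have hsum : ∫ x in (0:ℝ)..π, Real.cos (((m:ℝ) + n) * x) = 0 := by
    have hmn : ((m:ℝ) + n) ≠ 0 := by positivity
    rw [integral_cos_rmul _ hmn]
    have : ((m:ℝ) + n) * π = ((m + n : ℤ) : ℝ) * π := by push_cast; ring
    rw [this, Real.sin_int_mul_pi]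
    simp
  rw [hsum]
  by_cases h : m = n
  · subst h; simp
  · have hd : ((m:ℝ) - n) ≠ 0 := by
      intro hc
      exact h (by exact_mod_cast (by linarith : (m:ℝ) = n))
    rw [integral_cos_rmul _ hd]
    have : ((m:ℝ) - n) * π = ((m - n : ℤ) : ℝ) * π := by push_cast; ring
    rw [this, Real.sin_int_mul_pi]
    simp [h]


/-- The profile `W_k` in elliptic coordinates:
`W_k(ξ,η) = 2^{1-k} · ∑_{j=0}^{⌊(k-1)/2⌋} C(k,j)·exp(−(k−2j)ξ)·sin((k−2j)η)`. -/
noncomputable def Wk (k : ℕ) (ξ η : ℝ) : ℝ :=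
  (2 : ℝ) ^ (1 - (k : ℤ)) *
    ∑ j ∈ Finset.range ((k - 1) / 2 + 1),
      (Nat.choose k j : ℝ) * Real.exp (-(((k : ℝ) - 2 * j)) * ξ) *
        Real.sin (((k : ℝ) - 2 * j) * η)

lemma deriv_Wk (k : ℕ) (η : ℝ) :
    deriv (fun ξ : ℝ => Wk k ξ η) 0
      = (2 : ℝ) ^ (1 - (k : ℤ)) *
          ∑ j ∈ Finset.range ((k - 1) / 2 + 1),
            (Nat.choose k j : ℝ) * (-((k : ℝ) - 2 * j)) *
              Real.sin (((k : ℝ) - 2 * j) * η) := by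
  have h : HasDerivAt (fun ξ : ℝ => Wk k ξ η)
      ((2 : ℝ) ^ (1 - (k : ℤ)) *
        ∑ j ∈ Finset.range ((k - 1) / 2 + 1),
          (Nat.choose k j : ℝ) * (-((k : ℝ) - 2 * j)) *
            Real.sin (((k : ℝ) - 2 * j) * η)) 0 := by
    unfold Wk
    refine HasDerivAt.const_mul _ (HasDerivAt.fun_sum fun j hj => ?_)
    have h1 : HasDerivAt (fun ξ : ℝ => Real.exp (-(((k : ℝ) - 2 * j)) * ξ))
        (-((k : ℝ) - 2 * j)) 0 := by
      simpa using ((hasDerivAt_id (0:ℝ)).const_mul (-(((k : ℝ) - 2 * j)))).exp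
    exact (h1.const_mul _).mul_const _
  exact h.deriv

/-- For every integer `k ≥ 1`,
`∫_0^π W_k(0,η)·(∂W_k/∂ξ)(0,η) dη = −(π / 2^{2k-1}) · ∑_{j=0}^{⌊(k-1)/2⌋} (k−2j)·C(k,j)²`. -/
theorem integral_Wk_mul_partialXi (k : ℕ) (hk : 1 ≤ k) :
    ∫ η in (0:ℝ)..Real.pi, Wk k 0 η * deriv (fun ξ : ℝ => Wk k ξ η) 0
      = -(Real.pi / 2 ^ (2 * k - 1)) *
          ∑ j ∈ Finset.range ((k - 1) / 2 + 1),
            ((k : ℝ) - 2 * j) * (Nat.choose k j : ℝ) ^ 2 := by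
  set N := (k - 1) / 2 + 1 with hN
  set c : ℝ := (2 : ℝ) ^ (1 - (k : ℤ)) with hc
  -- positivity of the integer frequencies
  have hpos : ∀ i ∈ Finset.range N, (0 : ℤ) < (k : ℤ) - 2 * i := by
    intro i hi
    simp only [Finset.mem_range, hN] at hi
    omega
  have hcast : ∀ i : ℕ, (((k : ℤ) - 2 * i : ℤ) : ℝ) = (k : ℝ) - 2 * i := by
    intro i; push_cast; ring
  -- rewrite the integrand as a double sum
  have hint : ∀ η : ℝ, Wk k 0 η * deriv (fun ξ : ℝ => Wk k ξ η) 0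
      = ∑ i ∈ Finset.range N, ∑ j ∈ Finset.range N,
          (c * c * ((Nat.choose k i : ℝ) * ((Nat.choose k j : ℝ) * (-((k : ℝ) - 2 * j))))) *
            (Real.sin (((k : ℝ) - 2 * i) * η) * Real.sin (((k : ℝ) - 2 * j) * η)) := by
    intro η
    rw [deriv_Wk]
    unfold Wk
    simp only [mul_zero, neg_zero, Real.exp_zero, mul_one]
    rw [mul_mul_mul_comm, Finset.sum_mul_sum, Finset.mul_sum]
    apply Finset.sum_congr rfl
    intro i _
    rw [Finset.mul_sum]
    apply Finset.sum_congr rfl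
    intro j _
    ring
  simp only [hint]
  -- integrate term by term
  rw [intervalIntegral.integral_finset_sum]
  · have inner : ∀ i ∈ Finset.range N,
        (∫ η in (0:ℝ)..π, ∑ j ∈ Finset.range N,
          (c * c * ((Nat.choose k i : ℝ) * ((Nat.choose k j : ℝ) * (-((k : ℝ) - 2 * j))))) *
            (Real.sin (((k : ℝ) - 2 * i) * η) * Real.sin (((k : ℝ) - 2 * j) * η)))
        = (c * c * ((Nat.choose k i : ℝ) * ((Nat.choose k i : ℝ) * (-((k : ℝ) - 2 * i))))) * (π / 2) := by
      intro i hi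
      rw [intervalIntegral.integral_finset_sum]
      · have hterm : ∀ j ∈ Finset.range N,
            (∫ η in (0:ℝ)..π,
              (c * c * ((Nat.choose k i : ℝ) * ((Nat.choose k j : ℝ) * (-((k : ℝ) - 2 * j))))) *
                (Real.sin (((k : ℝ) - 2 * i) * η) * Real.sin (((k : ℝ) - 2 * j) * η)))
            = (c * c * ((Nat.choose k i : ℝ) * ((Nat.choose k j : ℝ) * (-((k : ℝ) - 2 * j))))) *
                (if i = j then π / 2 else 0) := by
          intro j hj
          rw [intervalIntegral.integral_const_mul]
          congr 1
          have := sin_orth ((k : ℤ) - 2 * i) ((k : ℤ) - 2 * j) (hpos i hi) (hpos j hj)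
          rw [hcast, hcast] at this
          rw [this]
          congr 1
          simp only [eq_iff_iff]
          constructor
          · intro h; omega
          · intro h; omega
        rw [Finset.sum_congr rfl hterm]
        simp only [mul_ite, mul_zero]
        rw [Finset.sum_ite_eq (Finset.range N) i _]
        simp [hi]
      · intro j hj
        apply Continuous.intervalIntegrable
        fun_prop
    rw [Finset.sum_congr rfl inner]
    rw [Finset.mul_sum]
    congr 1 with i
    have hpow : c * c * (π / 2) = π / 2 ^ (2 * k - 1) := by
      rw [hc, ← zpow_add₀ (two_ne_zero)]
      have h1 : (2 : ℝ) ^ (2 * k - 1) = (2 : ℝ) ^ ((2 * (k : ℤ)) - 1) := by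
        rw [← zpow_natCast]
        congr 1
        omega
      have h2 : (1 - (k : ℤ)) + (1 - (k : ℤ)) = -(2 * (k : ℤ) - 1) + 1 := by ring
      rw [h1, h2, zpow_add₀ (two_ne_zero), zpow_neg, zpow_one]
      field_simp
    calc c * c * ((Nat.choose k i : ℝ) * ((Nat.choose k i : ℝ) * (-((k : ℝ) - 2 * i)))) * (π / 2)
        = -(c * c * (π / 2)) * (((k : ℝ) - 2 * i) * (Nat.choose k i : ℝ) ^ 2) := by ring
      _ = -(π / 2 ^ (2 * k - 1)) * (((k : ℝ) - 2 * i) * (Nat.choose k i : ℝ) ^ 2) := by rw [hpow]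
  · intro i hi
    apply Continuous.intervalIntegrable
    apply continuous_finset_sum
    intro j hj
    fun_prop
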